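/- Let A and B be unital ℂ-algebras with ℤ₂-gradings 𝒜 and ℬ, and let u ∈ A be homogeneous of degree 0 with u² = 1 which implements the grading of A (u·a = (−1)^i·a·u for every i : ZMod 2 and every a ∈ 𝒜 i). Then there is a ℂ-algebra isomorphism κ from the graded tensor product A ⊗' B onto the ordinary tensor product A ⊗[ℂ] B satisfying κ(a ⊗' b) = a ⊗ b₀ + (a·u) ⊗ b₁ for all a ∈ A and b ∈ B, whose inverse satisfies κ⁻¹(a ⊗ b) = a ⊗' b₀ + (a·u) ⊗' b₁. (Algebraic core of the Klein transformation, Proposition 3.1 / Theorem 3.2(a).) -/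

import Mathlib

open scoped TensorProduct
open DirectSum

section KleinAux

variable {A B C : Type*} [Ring A] [Ring B] [Ring C]
  [Algebra ℂ A] [Algebra ℂ B] [Algebra ℂ C]
variable (𝒜 : ZMod 2 → Submodule ℂ A) (ℬ : ZMod 2 → Submodule ℂ B)
variable [GradedAlgebra 𝒜] [GradedAlgebra ℬ]

/-- The linear map `b ↦ ι b₀ + v * ι b₁`. -/
noncomputable def kleinL (ι : B →ₗ[ℂ] C) (v : C) : B →ₗ[ℂ] C :=
  ι ∘ₗ ((ℬ 0).subtype ∘ₗ (DirectSum.component ℂ (ZMod 2) (fun i => ℬ i) 0)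
      ∘ₗ (DirectSum.decomposeLinearEquiv ℬ).toLinearMap)
  + (LinearMap.mulLeft ℂ v) ∘ₗ ι ∘ₗ ((ℬ 1).subtype
      ∘ₗ (DirectSum.component ℂ (ZMod 2) (fun i => ℬ i) 1)
      ∘ₗ (DirectSum.decomposeLinearEquiv ℬ).toLinearMap)

lemma kleinL_apply (ι : B →ₗ[ℂ] C) (v : C) (b : B) :
    kleinL ℬ ι v b = ι ((decompose ℬ b 0 : ℬ 0) : B)
      + v * ι ((decompose ℬ b 1 : ℬ 1) : B) := rfl

lemma kleinL_of_mem_zero (ι : B →ₗ[ℂ] C) (v : C) {b : B} (hb : b ∈ ℬ 0) :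
    kleinL ℬ ι v b = ι b := by
  rw [kleinL_apply, DirectSum.decompose_of_mem_same ℬ hb,
    DirectSum.decompose_of_mem_ne ℬ hb (by decide : (0 : ZMod 2) ≠ 1)]
  simp

lemma kleinL_of_mem_one (ι : B →ₗ[ℂ] C) (v : C) {b : B} (hb : b ∈ ℬ 1) :
    kleinL ℬ ι v b = v * ι b := by
  rw [kleinL_apply, DirectSum.decompose_of_mem_same ℬ hb,
    DirectSum.decompose_of_mem_ne ℬ hb (by decide : (1 : ZMod 2) ≠ 0)]
  simp

/-- The algebra homomorphism `b ↦ ι b₀ + v * ι b₁`, for `v` an involution commuting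
with the range of `ι`. -/
noncomputable def kleinHom (ι : B →ₐ[ℂ] C) (v : C) (hv : v * v = 1)
    (hcomm : ∀ b, Commute v (ι b)) : B →ₐ[ℂ] C :=
  AlgHom.ofLinearMap (kleinL ℬ ι.toLinearMap v)
    (by rw [kleinL_of_mem_zero ℬ _ _ (SetLike.one_mem_graded ℬ)]; simpa using map_one ι)
    (by
      rw [LinearMap.map_mul_iff]
      refine DirectSum.decompose_lhom_ext ℬ fun j => ?_
      ext x : 1
      refine DirectSum.decompose_lhom_ext ℬ fun k => ?_
      ext y : 1
      dsimp only [LinearMap.coe_comp, Function.comp_apply, Submodule.coe_subtype,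
        LinearMap.compl₂_apply, LinearMap.compr₂_apply, LinearMap.mul_apply']
      have hx := x.2
      have hy := y.2
      have hxy : (x : B) * (y : B) ∈ ℬ (j + k) := SetLike.mul_mem_graded hx hy
      fin_cases j <;> fin_cases k
      · rw [kleinL_of_mem_zero ℬ _ _ hx, kleinL_of_mem_zero ℬ _ _ hy,
          kleinL_of_mem_zero ℬ _ _ (by exact hxy : (x : B) * (y : B) ∈ ℬ 0)]
        simp [map_mul]
      · rw [kleinL_of_mem_zero ℬ _ _ hx, kleinL_of_mem_one ℬ _ _ hy,
          kleinL_of_mem_one ℬ _ _ (by exact hxy : (x : B) * (y : B) ∈ ℬ 1)]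
        dsimp
        rw [map_mul, ← mul_assoc, (hcomm _).eq, mul_assoc]
      · rw [kleinL_of_mem_one ℬ _ _ hx, kleinL_of_mem_zero ℬ _ _ hy,
          kleinL_of_mem_one ℬ _ _ (by exact hxy : (x : B) * (y : B) ∈ ℬ 1)]
        dsimp
        rw [map_mul, mul_assoc]
      · rw [kleinL_of_mem_one ℬ _ _ hx, kleinL_of_mem_one ℬ _ _ hy,
          kleinL_of_mem_zero ℬ _ _ (by exact hxy : (x : B) * (y : B) ∈ ℬ 0)]
        dsimp
        rw [map_mul, mul_assoc v (ι (x : B)), ← mul_assoc (ι (x : B)) v,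
          ← (hcomm (x : B)).eq, ← mul_assoc, ← mul_assoc, hv, one_mul])

lemma kleinHom_apply (ι : B →ₐ[ℂ] C) (v : C) (hv : v * v = 1)
    (hcomm : ∀ b, Commute v (ι b)) (b : B) :
    kleinHom ℬ ι v hv hcomm b = ι ((decompose ℬ b 0 : ℬ 0) : B)
      + v * ι ((decompose ℬ b 1 : ℬ 1) : B) := rfl

lemma decompose_zmod2_sum (b : B) :
    ((decompose ℬ b 0 : ℬ 0) : B) + ((decompose ℬ b 1 : ℬ 1) : B) = b := by
  classical
  conv_rhs => rw [← DirectSum.sum_support_decompose ℬ b]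
  rw [Finset.sum_subset (Finset.subset_univ ((decompose ℬ b).support))
    (fun x _ hx => by
      rw [DFinsupp.notMem_support_iff.mp hx, ZeroMemClass.coe_zero])]
  have huniv : (Finset.univ : Finset (ZMod 2)) = {0, 1} := by decide
  rw [huniv, Finset.sum_insert (by decide), Finset.sum_singleton]

-- Multiplication lemmas for the graded tensor product with one inhomogeneous factor.

lemma gtmul_zero_left_mul (a₁ : A) {c : B} (hc : c ∈ ℬ 0) (a₂ : A) (b₂ : B) :
    (a₁ ᵍ⊗ₜ[ℂ] c * a₂ ᵍ⊗ₜ[ℂ] b₂ : 𝒜 ᵍ⊗[ℂ] ℬ) = (a₁ * a₂) ᵍ⊗ₜ[ℂ] (c * b₂) := by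
  induction a₂ using DirectSum.Decomposition.inductionOn 𝒜 with
  | zero => simp [GradedTensorProduct.tmul, TensorProduct.zero_tmul]
  | @homogeneous i a =>
      exact GradedTensorProduct.tmul_zero_coe_mul_coe_tmul 𝒜 ℬ a₁ ⟨c, hc⟩ a b₂
  | add m m' hm hm' =>
      simp only [GradedTensorProduct.tmul, TensorProduct.add_tmul, map_add, mul_add, add_mul,
        hm, hm', mul_add]

lemma gtmul_zero_right_mul (a₁ : A) (b₁ : B) {d : A} (hd : d ∈ 𝒜 0) (b₂ : B) :
    (a₁ ᵍ⊗ₜ[ℂ] b₁ * d ᵍ⊗ₜ[ℂ] b₂ : 𝒜 ᵍ⊗[ℂ] ℬ) = (a₁ * d) ᵍ⊗ₜ[ℂ] (b₁ * b₂) := by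
  induction b₁ using DirectSum.Decomposition.inductionOn ℬ with
  | zero => simp [GradedTensorProduct.tmul, TensorProduct.tmul_zero]
  | @homogeneous j b =>
      exact GradedTensorProduct.tmul_coe_mul_zero_coe_tmul 𝒜 ℬ a₁ b ⟨d, hd⟩ b₂
  | add m m' hm hm' =>
      simp only [GradedTensorProduct.tmul, TensorProduct.tmul_add, map_add, mul_add, add_mul,
        hm, hm', add_mul]

end KleinAux

/-- **Klein transformation** (algebraic core, Proposition 3.1 / Theorem 3.2(a)).
If `u ∈ 𝒜 0` is an even square root of `1` implementing the grading of `A`, then the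
graded (Fermi) tensor product `𝒜 ᵍ⊗[ℂ] ℬ` is isomorphic, as a `ℂ`-algebra, to the ordinary
tensor product `A ⊗[ℂ] B`, via `a ⊗' b ↦ a ⊗ b₀ + (a·u) ⊗ b₁`. -/
theorem klein_transformation_exists
    {A B : Type*} [Ring A] [Ring B] [Algebra ℂ A] [Algebra ℂ B]
    (𝒜 : ZMod 2 → Submodule ℂ A) (ℬ : ZMod 2 → Submodule ℂ B)
    [GradedAlgebra 𝒜] [GradedAlgebra ℬ]
    (u : A) (hu0 : u ∈ 𝒜 0) (hu2 : u * u = 1)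
    (hu : ∀ (i : ZMod 2) (a : A), a ∈ 𝒜 i → u * a = ((-1 : ℂ) ^ i.val) • (a * u)) :
    ∃ κ : (𝒜 ᵍ⊗[ℂ] ℬ) ≃ₐ[ℂ] (A ⊗[ℂ] B),
      (∀ (a : A) (b : B),
        κ (a ᵍ⊗ₜ[ℂ] b) =
          a ⊗ₜ[ℂ] ((DirectSum.decompose ℬ b 0 : ℬ 0) : B)
            + (a * u) ⊗ₜ[ℂ] ((DirectSum.decompose ℬ b 1 : ℬ 1) : B)) ∧
      (∀ (a : A) (b : B),
        κ.symm (a ⊗ₜ[ℂ] b) =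
          a ᵍ⊗ₜ[ℂ] ((DirectSum.decompose ℬ b 0 : ℬ 0) : B)
            + (a * u) ᵍ⊗ₜ[ℂ] ((DirectSum.decompose ℬ b 1 : ℬ 1) : B)) := by
  classical
  have zmod2 : ∀ i : ZMod 2, i = 0 ∨ i = 1 := by decide
  have h1B : (1 : B) ∈ ℬ 0 := SetLike.one_mem_graded ℬ
  -- membership facts for components
  have mem0 : ∀ b : B, ((decompose ℬ b 0 : ℬ 0) : B) ∈ ℬ 0 := fun b => SetLike.coe_mem _
  have mem1 : ∀ b : B, ((decompose ℬ b 1 : ℬ 1) : B) ∈ ℬ 1 := fun b => SetLike.coe_mem _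
  -- the forward algebra hom `B →ₐ A ⊗ B`
  have hvAB : ((u ⊗ₜ[ℂ] (1 : B)) : A ⊗[ℂ] B) * (u ⊗ₜ[ℂ] (1 : B)) = 1 := by
    rw [Algebra.TensorProduct.tmul_mul_tmul, hu2, one_mul, Algebra.TensorProduct.one_def]
  have hcommAB : ∀ b : B, Commute ((u ⊗ₜ[ℂ] (1 : B)) : A ⊗[ℂ] B)
      ((Algebra.TensorProduct.includeRight : B →ₐ[ℂ] A ⊗[ℂ] B) b) := by
    intro b
    show _ * _ = _ * _
    simp [Algebra.TensorProduct.tmul_mul_tmul]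
  set g : B →ₐ[ℂ] A ⊗[ℂ] B :=
    kleinHom ℬ Algebra.TensorProduct.includeRight (u ⊗ₜ[ℂ] (1 : B)) hvAB hcommAB with hgdef
  have hg : ∀ b : B, g b = (1 : A) ⊗ₜ[ℂ] ((decompose ℬ b 0 : ℬ 0) : B)
      + u ⊗ₜ[ℂ] ((decompose ℬ b 1 : ℬ 1) : B) := by
    intro b
    rw [hgdef, kleinHom_apply]
    simp [Algebra.TensorProduct.tmul_mul_tmul]
  have hg0 : ∀ {c : B}, c ∈ ℬ 0 → g c = (1 : A) ⊗ₜ[ℂ] c := by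
    intro c hc
    rw [hgdef]
    show kleinL ℬ (Algebra.TensorProduct.includeRight : B →ₐ[ℂ] A ⊗[ℂ] B).toLinearMap (u ⊗ₜ[ℂ] (1 : B)) c = _
    rw [kleinL_of_mem_zero ℬ _ _ hc]
    rfl
  have hg1 : ∀ {c : B}, c ∈ ℬ 1 → g c = u ⊗ₜ[ℂ] c := by
    intro c hc
    rw [hgdef]
    show kleinL ℬ (Algebra.TensorProduct.includeRight : B →ₐ[ℂ] A ⊗[ℂ] B).toLinearMap (u ⊗ₜ[ℂ] (1 : B)) c = _
    rw [kleinL_of_mem_one ℬ _ _ hc]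
    show (u ⊗ₜ[ℂ] (1 : B)) * ((1 : A) ⊗ₜ[ℂ] c) = _
    simp [Algebra.TensorProduct.tmul_mul_tmul]
  have hanti : ∀ ⦃i j : ZMod 2⦄ (a : 𝒜 i) (b : ℬ j),
      (Algebra.TensorProduct.includeLeft : A →ₐ[ℂ] A ⊗[ℂ] B) a * g b
        = (-1 : ℤˣ) ^ (j * i) • (g b * (Algebra.TensorProduct.includeLeft : A →ₐ[ℂ] A ⊗[ℂ] B) (a : A)) := by
    intro i j a b
    have ha := a.2
    have hb := b.2
    rcases zmod2 i with rfl | rfl <;> rcases zmod2 j with rfl | rfl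
    · rw [hg0 hb]
      simp [Algebra.TensorProduct.tmul_mul_tmul]
    · rw [hg1 hb]
      have huc : u * (a : A) = (a : A) * u := by simpa using hu 0 a ha
      simp [Algebra.TensorProduct.tmul_mul_tmul, huc]
    · rw [hg0 hb]
      simp [Algebra.TensorProduct.tmul_mul_tmul]
    · rw [hg1 hb]
      have huc : u * (a : A) = -((a : A) * u) := by
        simpa [show ((1 : ZMod 2)).val = 1 from rfl] using hu 1 a ha
      rw [one_mul, uzpow_one]
      simp only [Algebra.TensorProduct.includeLeft_apply, Algebra.TensorProduct.tmul_mul_tmul,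
        one_mul, mul_one, huc]
      rw [Units.smul_def]
      simp [TensorProduct.neg_tmul]
  set φ : (𝒜 ᵍ⊗[ℂ] ℬ) →ₐ[ℂ] A ⊗[ℂ] B :=
    GradedTensorProduct.lift 𝒜 ℬ Algebra.TensorProduct.includeLeft g hanti with hφdef
  have hφ : ∀ (a : A) (b : B), φ (a ᵍ⊗ₜ[ℂ] b)
      = a ⊗ₜ[ℂ] ((decompose ℬ b 0 : ℬ 0) : B) + (a * u) ⊗ₜ[ℂ] ((decompose ℬ b 1 : ℬ 1) : B) := by
    intro a b
    rw [hφdef, GradedTensorProduct.lift_tmul, hg b]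
    simp [Algebra.TensorProduct.tmul_mul_tmul, mul_add]
  -- the backward algebra hom
  have hvG : ((u ᵍ⊗ₜ[ℂ] (1 : B)) : 𝒜 ᵍ⊗[ℂ] ℬ) * (u ᵍ⊗ₜ[ℂ] (1 : B)) = 1 := by
    rw [gtmul_zero_right_mul 𝒜 ℬ u (1 : B) hu0 (1 : B), hu2, one_mul]
    rfl
  have hcommG0 : ∀ b : B, Commute ((u ᵍ⊗ₜ[ℂ] (1 : B)) : 𝒜 ᵍ⊗[ℂ] ℬ)
      ((GradedTensorProduct.includeRight 𝒜 ℬ) b) := by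
    intro b
    show _ * _ = _ * _
    show (u ᵍ⊗ₜ[ℂ] (1 : B)) * ((1 : A) ᵍ⊗ₜ[ℂ] b) = ((1 : A) ᵍ⊗ₜ[ℂ] b) * (u ᵍ⊗ₜ[ℂ] (1 : B))
    rw [gtmul_zero_left_mul 𝒜 ℬ u h1B (1 : A) b, gtmul_zero_right_mul 𝒜 ℬ (1 : A) b hu0 (1 : B)]
    simp
  set g' : B →ₐ[ℂ] (𝒜 ᵍ⊗[ℂ] ℬ) :=
    kleinHom ℬ (GradedTensorProduct.includeRight 𝒜 ℬ) (u ᵍ⊗ₜ[ℂ] (1 : B)) hvG hcommG0 with hg'def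
  have hg' : ∀ b : B, g' b = (1 : A) ᵍ⊗ₜ[ℂ] ((decompose ℬ b 0 : ℬ 0) : B)
      + u ᵍ⊗ₜ[ℂ] ((decompose ℬ b 1 : ℬ 1) : B) := by
    intro b
    rw [hg'def, kleinHom_apply]
    show _ + (u ᵍ⊗ₜ[ℂ] (1 : B)) * ((1 : A) ᵍ⊗ₜ[ℂ] _) = _
    rw [gtmul_zero_left_mul 𝒜 ℬ u h1B (1 : A) _]
    simp
  -- the key anticommutation computation in the graded tensor product
  have key : ∀ {c : B}, c ∈ ℬ 1 → ∀ a : A,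
      ((u ᵍ⊗ₜ[ℂ] c) : 𝒜 ᵍ⊗[ℂ] ℬ) * (a ᵍ⊗ₜ[ℂ] (1 : B)) = (a * u) ᵍ⊗ₜ[ℂ] c := by
    intro c hc a
    induction a using DirectSum.Decomposition.inductionOn 𝒜 with
    | zero =>
        simp [GradedTensorProduct.tmul, TensorProduct.zero_tmul]
    | homogeneous a' =>
        rename_i i
        have := GradedTensorProduct.tmul_coe_mul_coe_tmul 𝒜 ℬ u ⟨c, hc⟩ a' (1 : B)
        rcases zmod2 i with rfl | rfl
        · rw [this]
          have huc : u * (a' : A) = (a' : A) * u := by simpa using hu 0 a' a'.2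
          simp [huc]
        · rw [this]
          have huc : u * (a' : A) = -((a' : A) * u) := by
            simpa [show ((1 : ZMod 2)).val = 1 from rfl] using hu 1 a' a'.2
          rw [mul_one, uzpow_one, Units.smul_def, huc, mul_one]
          simp [GradedTensorProduct.tmul, TensorProduct.neg_tmul]
    | add m m' hm hm' =>
        have expand : ∀ x y : A, ((x + y) ᵍ⊗ₜ[ℂ] (1 : B) : 𝒜 ᵍ⊗[ℂ] ℬ)
            = x ᵍ⊗ₜ[ℂ] (1 : B) + y ᵍ⊗ₜ[ℂ] (1 : B) := by
          intro x y
          simp [GradedTensorProduct.tmul, TensorProduct.add_tmul]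
        rw [expand, mul_add, hm, hm']
        rw [show ((m + m') * u) = m * u + m' * u from add_mul m m' u]
        simp [GradedTensorProduct.tmul, TensorProduct.add_tmul]
  have hcommψ : ∀ (a : A) (b : B),
      Commute ((GradedTensorProduct.includeLeft 𝒜 ℬ) a) (g' b) := by
    intro a b
    show _ * _ = _ * _
    rw [GradedTensorProduct.includeLeft_apply, hg' b, mul_add, add_mul]
    rw [gtmul_zero_left_mul 𝒜 ℬ a h1B (1 : A) _, gtmul_zero_left_mul 𝒜 ℬ a h1B u _,
      gtmul_zero_left_mul 𝒜 ℬ (1 : A) (mem0 b) a (1 : B), key (mem1 b) a]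
    simp
  set ψ : (A ⊗[ℂ] B) →ₐ[ℂ] (𝒜 ᵍ⊗[ℂ] ℬ) :=
    Algebra.TensorProduct.lift (GradedTensorProduct.includeLeft 𝒜 ℬ) g' hcommψ with hψdef
  have hψ : ∀ (a : A) (b : B), ψ (a ⊗ₜ[ℂ] b)
      = a ᵍ⊗ₜ[ℂ] ((decompose ℬ b 0 : ℬ 0) : B)
        + (a * u) ᵍ⊗ₜ[ℂ] ((decompose ℬ b 1 : ℬ 1) : B) := by
    intro a b
    rw [hψdef, Algebra.TensorProduct.lift_tmul, GradedTensorProduct.includeLeft_apply, hg' b,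
      mul_add, gtmul_zero_left_mul 𝒜 ℬ a h1B (1 : A) _, gtmul_zero_left_mul 𝒜 ℬ a h1B u _]
    simp
  -- decompose facts on components
  have d00 : ∀ b : B, ((decompose ℬ ((decompose ℬ b 0 : ℬ 0) : B) 0 : ℬ 0) : B)
      = ((decompose ℬ b 0 : ℬ 0) : B) := fun b => DirectSum.decompose_of_mem_same ℬ (mem0 b)
  have d01 : ∀ b : B, ((decompose ℬ ((decompose ℬ b 0 : ℬ 0) : B) 1 : ℬ 1) : B) = 0 :=
    fun b => DirectSum.decompose_of_mem_ne ℬ (mem0 b) (by decide : (0 : ZMod 2) ≠ 1)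
  have d10 : ∀ b : B, ((decompose ℬ ((decompose ℬ b 1 : ℬ 1) : B) 0 : ℬ 0) : B) = 0 :=
    fun b => DirectSum.decompose_of_mem_ne ℬ (mem1 b) (by decide : (1 : ZMod 2) ≠ 0)
  have d11 : ∀ b : B, ((decompose ℬ ((decompose ℬ b 1 : ℬ 1) : B) 1 : ℬ 1) : B)
      = ((decompose ℬ b 1 : ℬ 1) : B) := fun b => DirectSum.decompose_of_mem_same ℬ (mem1 b)
  have hauu : ∀ a : A, a * u * u = a := by
    intro a; rw [mul_assoc, hu2, mul_one]
  -- the two compositions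
  have comp1 : φ.comp ψ = AlgHom.id ℂ (A ⊗[ℂ] B) := by
    apply Algebra.TensorProduct.ext'
    intro a b
    rw [AlgHom.comp_apply, hψ a b, map_add, hφ, hφ, d00, d01, d10, d11, hauu]
    rw [TensorProduct.tmul_zero, add_zero, zero_add,
      ← TensorProduct.tmul_add, decompose_zmod2_sum]
    rfl
  have comp2 : ψ.comp φ = AlgHom.id ℂ (𝒜 ᵍ⊗[ℂ] ℬ) := by
    apply AlgHom.toLinearMap_injective
    apply GradedTensorProduct.hom_ext
    apply TensorProduct.ext'
    intro a b
    show ψ (φ (a ᵍ⊗ₜ[ℂ] b)) = a ᵍ⊗ₜ[ℂ] b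
    rw [hφ a b, map_add, hψ, hψ, d00, d01, d10, d11, hauu]
    have tz : ∀ x : A, (x ᵍ⊗ₜ[ℂ] (0 : B) : 𝒜 ᵍ⊗[ℂ] ℬ) = 0 := by
      intro x; simp [GradedTensorProduct.tmul, TensorProduct.tmul_zero]
    rw [tz, add_zero, zero_add]
    have ta : (a ᵍ⊗ₜ[ℂ] ((decompose ℬ b 0 : ℬ 0) : B) : 𝒜 ᵍ⊗[ℂ] ℬ)
        + a ᵍ⊗ₜ[ℂ] ((decompose ℬ b 1 : ℬ 1) : B)
        = a ᵍ⊗ₜ[ℂ] (((decompose ℬ b 0 : ℬ 0) : B) + ((decompose ℬ b 1 : ℬ 1) : B)) := by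
      simp [GradedTensorProduct.tmul, TensorProduct.tmul_add]
    rw [ta, decompose_zmod2_sum]
  refine ⟨AlgEquiv.ofAlgHom φ ψ comp1 comp2, fun a b => hφ a b, fun a b => hψ a b⟩
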